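/- Let n ≥ 3 and let k be a unit modulo n of multiplicative order α ≥ 2, and assume wt(n,k;α) < ⌊n/2⌋ (so every minimal prime sequence realizing wt(n,k;α) has length at least 2, and hence has a well-defined positive degree and codegree). Let i be a minimal prime sequence realizing wt(n,k;α) whose degree is largest among all minimal prime sequences realizing wt(n,k;α), and let i′ be a minimal prime sequence realizing wt(n,k;α) whose codegree is smallest among all such sequences. Then deg(i) + codeg(i′) = α. -/

import Mathlib

/-- The set `Ω(i, λ) = { b₁k^{i₁} + ⋯ + b_r k^{i_r} mod n : |b_j| ≤ λ_j }` in `ℤ/nℤ`. -/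
def OmegaSet (n : ℕ) (k : (ZMod n)ˣ) {r : ℕ} (i : Fin r → ℕ) (lam : Fin r → ℕ) :
    Set (ZMod n) :=
  { x | ∃ b : Fin r → ℤ, (∀ j, |b j| ≤ (lam j : ℤ)) ∧
      x = ∑ j, (b j : ZMod n) * ((k ^ i j : (ZMod n)ˣ) : ZMod n) }

/-- A `sequence`: a strictly decreasing tuple `α−1 ≥ i₁ > i₂ > ⋯ > i_r ≥ 0`. -/
def IsSeq (α : ℕ) {r : ℕ} (i : Fin r → ℕ) : Prop :=
  (∀ j, i j ≤ α - 1) ∧ StrictAnti i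

/-- `wt(n, k; i)`: the minimal total weight `λ₁ + ⋯ + λ_r` over tuples `λ`
with `Ω(i,λ) = ℤ/nℤ`. -/
noncomputable def wtSeq (n : ℕ) (k : (ZMod n)ˣ) {r : ℕ} (i : Fin r → ℕ) : ℕ :=
  sInf { s | ∃ lam : Fin r → ℕ, OmegaSet n k i lam = Set.univ ∧ ∑ j, lam j = s }

/-- The maximal sequence `Δ : α−1 > α−2 > ⋯ > 1 > 0`. -/
def DeltaSeq (α : ℕ) : Fin α → ℕ := fun j => α - 1 - (j : ℕ)

/-- `wt(n, k; α) := wt(n, k; Δ)`. -/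
noncomputable def wtAlpha (n : ℕ) (k : (ZMod n)ˣ) (α : ℕ) : ℕ :=
  wtSeq n k (DeltaSeq α)

/-- The degree of a sequence: its largest entry. -/
noncomputable def degSeq {r : ℕ} (i : Fin r → ℕ) : ℕ := sSup (Set.range i)

/-- The codegree of a sequence: its smallest nonzero entry. -/
noncomputable def codegSeq {r : ℕ} (i : Fin r → ℕ) : ℕ :=
  sInf { v | v ∈ Set.range i ∧ v ≠ 0 }

/-- A minimal prime sequence realizing `wt(n,k;α)`: a reduced sequence (i.e. one
containing `0`) of weight `wt(n,k;α)` such that no proper reduced subsequence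
has weight `wt(n,k;α)`. -/
def IsMinimalPrimeSeq (n : ℕ) (k : (ZMod n)ˣ) (α : ℕ) {r : ℕ} (i : Fin r → ℕ) : Prop :=
  IsSeq α i ∧ 0 ∈ Set.range i ∧ wtSeq n k i = wtAlpha n k α ∧
    ∀ (q : ℕ) (i₀ : Fin q → ℕ), IsSeq α i₀ → 0 ∈ Set.range i₀ →
      Set.range i₀ ⊆ Set.range i → Set.range i₀ ≠ Set.range i →
      wtSeq n k i₀ ≠ wtAlpha n k α

/-- `deg(n,k;α)`: the smallest degree of a minimal prime sequence realizing `wt(n,k;α)`. -/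
noncomputable def degNK (n : ℕ) (k : (ZMod n)ˣ) (α : ℕ) : ℕ :=
  sInf { d | ∃ (r : ℕ) (i : Fin r → ℕ), IsMinimalPrimeSeq n k α i ∧ degSeq i = d }

namespace MPwork

/-- achievable total weights -/
def Ach (n : ℕ) (k : (ZMod n)ˣ) {r : ℕ} (i : Fin r → ℕ) : Set ℕ :=
  { s | ∃ lam : Fin r → ℕ, OmegaSet n k i lam = Set.univ ∧ ∑ j, lam j = s }

lemma wtSeq_eq_sInf_ach (n : ℕ) (k : (ZMod n)ˣ) {r : ℕ} (i : Fin r → ℕ) :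
    wtSeq n k i = sInf (Ach n k i) := rfl

variable {n : ℕ} {k : (ZMod n)ˣ}

/-- The achievable set is nonempty for nonempty index type. -/
lemma ach_nonempty [NeZero n] {r : ℕ} (hr : r ≠ 0) (i : Fin r → ℕ) : (Ach n k i).Nonempty := by
  have hr' : 0 < r := Nat.pos_of_ne_zero hr
  set j0 : Fin r := ⟨0, hr'⟩
  refine ⟨∑ j, (fun _ : Fin r => n) j, fun _ => n, ?_, rfl⟩
  ext x
  simp only [Set.mem_univ, iff_true, OmegaSet, Set.mem_setOf_eq]
  set u : (ZMod n)ˣ := k ^ i j0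
  set c : ℕ := (x * ((u⁻¹ : (ZMod n)ˣ) : ZMod n)).val
  refine ⟨fun j => if j = j0 then (c : ℤ) else 0, ?_, ?_⟩
  · intro j
    by_cases h : j = j0 <;> simp [h]
    exact_mod_cast (ZMod.val_lt _).le
  · rw [Finset.sum_eq_single j0]
    · simp only [if_pos rfl]
      push_cast
      show x = (c : ZMod n) * (u : ZMod n)
      have : (c : ZMod n) = x * ((u⁻¹ : (ZMod n)ˣ) : ZMod n) := ZMod.natCast_val _ |>.trans (by
        simp [ZMod.cast_id])
      rw [this, mul_assoc]
      simp
    · intro j _ hj; simp [hj]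
    · intro h; exact absurd (Finset.mem_univ j0) h


/-- transfer of achievability along range inclusion (for injective source) -/
lemma ach_mono {q r : ℕ} {i₀ : Fin q → ℕ} {i₁ : Fin r → ℕ}
    (h₀ : Function.Injective i₀) (hsub : Set.range i₀ ⊆ Set.range i₁) :
    Ach n k i₀ ⊆ Ach n k i₁ := by
  have hex : ∀ j : Fin q, ∃ m : Fin r, i₁ m = i₀ j := fun j => hsub ⟨j, rfl⟩
  choose f hf using hex
  have hfinj : Function.Injective f := by
    intro a b hab
    apply h₀
    rw [← hf a, ← hf b, hab]
  rintro s ⟨lam, hΩ, hsum⟩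
  refine ⟨Function.extend f lam 0, ?_, ?_⟩
  · have : Set.univ ⊆ OmegaSet n k i₁ (Function.extend f lam 0) := by
      rw [← hΩ]
      rintro x ⟨b, hb, rfl⟩
      refine ⟨Function.extend f b 0, ?_, ?_⟩
      · intro m
        by_cases hm : ∃ j, f j = m
        · obtain ⟨j, rfl⟩ := hm
          rw [hfinj.extend_apply, hfinj.extend_apply]
          exact hb j
        · rw [Function.extend_apply' _ _ _ hm, Function.extend_apply' _ _ _ hm]
          simp
      · rw [← Finset.sum_subset (Finset.subset_univ (Finset.univ.image f))]
        · rw [Finset.sum_image (fun a _ b _ h => hfinj h)]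
          refine Finset.sum_congr rfl (fun j _ => ?_)
          rw [hfinj.extend_apply, hf]
        · intro m _ hm
          have hm' : ¬ ∃ j, f j = m := by
            intro ⟨j, hj⟩; exact hm (Finset.mem_image.2 ⟨j, Finset.mem_univ j, hj⟩)
          rw [Function.extend_apply' _ _ _ hm']
          simp
    exact Set.eq_univ_of_univ_subset this
  · rw [← hsum]
    rw [← Finset.sum_subset (Finset.subset_univ (Finset.univ.image f))]
    · rw [Finset.sum_image (fun a _ b _ h => hfinj h)]
      exact Finset.sum_congr rfl (fun j _ => by rw [hfinj.extend_apply])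
    · intro m _ hm
      have hm' : ¬ ∃ j, f j = m := by
        intro ⟨j, hj⟩; exact hm (Finset.mem_image.2 ⟨j, Finset.mem_univ j, hj⟩)
      rw [Function.extend_apply' _ _ _ hm']
      rfl

/-- wtSeq only depends on the (injective) range -/
lemma ach_eq_of_range {q r : ℕ} {i₀ : Fin q → ℕ} {i₁ : Fin r → ℕ}
    (h₀ : Function.Injective i₀) (h₁ : Function.Injective i₁)
    (h : Set.range i₀ = Set.range i₁) : Ach n k i₀ = Ach n k i₁ :=
  Set.Subset.antisymm (ach_mono h₀ h.le) (ach_mono h₁ h.ge)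

lemma wtSeq_eq_of_range {q r : ℕ} {i₀ : Fin q → ℕ} {i₁ : Fin r → ℕ}
    (h₀ : Function.Injective i₀) (h₁ : Function.Injective i₁)
    (h : Set.range i₀ = Set.range i₁) : wtSeq n k i₀ = wtSeq n k i₁ := by
  rw [wtSeq_eq_sInf_ach, wtSeq_eq_sInf_ach, ach_eq_of_range h₀ h₁ h]

/-- rotation invariance -/
lemma ach_rot {α : ℕ} (hα : orderOf k = α) {r : ℕ} (i : Fin r → ℕ) (c : ℕ) :
    Ach n k (fun j => (i j + c) % α) = Ach n k i := by
  have key : ∀ (lam : Fin r → ℕ),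
      OmegaSet n k (fun j => (i j + c) % α) lam = Set.univ ↔
      OmegaSet n k i lam = Set.univ := by
    intro lam
    set u : (ZMod n)ˣ := k ^ c with hu
    have hpow : ∀ j, ((k ^ ((i j + c) % α) : (ZMod n)ˣ) : ZMod n)
        = ((k ^ (i j) : (ZMod n)ˣ) : ZMod n) * (u : ZMod n) := by
      intro j
      rw [← hα, pow_mod_orderOf, hu, ← Units.val_mul, ← pow_add]
    constructor
    · intro hΩ
      apply Set.eq_univ_of_forall
      intro x
      have hx : x * (u : ZMod n) ∈ OmegaSet n k (fun j => (i j + c) % α) lam := by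
        rw [hΩ]; trivial
      obtain ⟨b, hb, hxe⟩ := hx
      refine ⟨b, hb, ?_⟩
      have heq : x * (u : ZMod n)
          = (∑ j, (b j : ZMod n) * ((k ^ (i j) : (ZMod n)ˣ) : ZMod n)) * (u : ZMod n) := by
        rw [hxe, Finset.sum_mul]
        exact Finset.sum_congr rfl (fun j _ => by rw [hpow j, mul_assoc])
      have := congrArg (fun y => y * ((u⁻¹ : (ZMod n)ˣ) : ZMod n)) heq
      simpa [Units.mul_inv_cancel_right] using this
    · intro hΩ
      apply Set.eq_univ_of_forall
      intro x
      have hx : x * ((u⁻¹ : (ZMod n)ˣ) : ZMod n) ∈ OmegaSet n k i lam := by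
        rw [hΩ]; trivial
      obtain ⟨b, hb, hxe⟩ := hx
      refine ⟨b, hb, ?_⟩
      calc x = x * ((u⁻¹ * u : (ZMod n)ˣ) : ZMod n) := by simp
      _ = (x * ((u⁻¹ : (ZMod n)ˣ) : ZMod n)) * (u : ZMod n) := by
            rw [Units.val_mul, mul_assoc]
      _ = ∑ j, (b j : ZMod n) * ((k ^ ((i j + c) % α) : (ZMod n)ˣ) : ZMod n) := by
            rw [hxe, Finset.sum_mul]
            exact Finset.sum_congr rfl (fun j _ => by rw [hpow j, mul_assoc])
  ext s
  constructor
  · rintro ⟨lam, hΩ, hsum⟩; exact ⟨lam, (key lam).1 hΩ, hsum⟩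
  · rintro ⟨lam, hΩ, hsum⟩; exact ⟨lam, (key lam).2 hΩ, hsum⟩

/-! ### Finset layer -/

/-- strictly decreasing enumeration of a finset of naturals -/
noncomputable def enum (S : Finset ℕ) : Fin S.card → ℕ :=
  fun j => (S.orderIsoOfFin rfl j.rev : ℕ)

lemma enum_strictAnti (S : Finset ℕ) : StrictAnti (enum S) := by
  intro a b hab
  have : b.rev < a.rev := Fin.rev_lt_rev.2 hab
  exact_mod_cast (S.orderIsoOfFin rfl).strictMono this

lemma enum_injective (S : Finset ℕ) : Function.Injective (enum S) :=
  (enum_strictAnti S).injective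

lemma range_enum (S : Finset ℕ) : Set.range (enum S) = (S : Set ℕ) := by
  ext x
  constructor
  · rintro ⟨j, rfl⟩; exact (S.orderIsoOfFin rfl j.rev).2
  · intro hx
    refine ⟨((S.orderIsoOfFin rfl).symm ⟨x, hx⟩).rev, ?_⟩
    simp [enum, Fin.rev_rev]

lemma mem_of_mem_enum {S : Finset ℕ} (j : Fin S.card) : enum S j ∈ S := by
  have : enum S j ∈ Set.range (enum S) := ⟨j, rfl⟩
  rw [range_enum] at this; exact_mod_cast this

noncomputable def wtF (n : ℕ) (k : (ZMod n)ˣ) (S : Finset ℕ) : ℕ := wtSeq n k (enum S)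

lemma wtF_eq_wtSeq {r : ℕ} {i : Fin r → ℕ} (hinj : Function.Injective i) :
    wtF n k (Finset.univ.image i) = wtSeq n k i := by
  apply wtSeq_eq_of_range (enum_injective _) hinj
  rw [range_enum, Finset.coe_image, Finset.coe_univ, Set.image_univ]

/-! ### The family of good sets -/

def rotF (α c : ℕ) (S : Finset ℕ) : Finset ℕ := S.image (fun x => (x + c) % α)

def Good (n : ℕ) (k : (ZMod n)ˣ) (α : ℕ) (S : Finset ℕ) : Prop :=
  (∀ x ∈ S, x < α) ∧ wtF n k S = wtAlpha n k α

section GoodFacts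

lemma deltaSeq_strictAnti {α : ℕ} : StrictAnti (DeltaSeq α) := by
  intro a b hab
  have ha : (a : ℕ) < α := a.isLt
  have hb : (b : ℕ) < α := b.isLt
  have : (a : ℕ) < (b : ℕ) := hab
  simp only [DeltaSeq]
  omega

lemma range_deltaSeq {α : ℕ} : Set.range (DeltaSeq α) = ((Finset.range α : Finset ℕ) : Set ℕ) := by
  ext x
  simp only [Set.mem_range, Finset.coe_range, Set.mem_Iio]
  constructor
  · rintro ⟨j, rfl⟩
    have : (j : ℕ) < α := j.isLt
    simp only [DeltaSeq]; omega
  · intro hx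
    exact ⟨⟨α - 1 - x, by omega⟩, by simp only [DeltaSeq]; omega⟩

lemma wtF_range_eq {α : ℕ} : wtF n k (Finset.range α) = wtAlpha n k α :=
  wtSeq_eq_of_range (enum_injective _) (deltaSeq_strictAnti).injective
    (by rw [range_enum, range_deltaSeq])

lemma good_range {α : ℕ} : Good n k α (Finset.range α) :=
  ⟨fun x hx => Finset.mem_range.1 hx, wtF_range_eq⟩

lemma wtAlpha_pos {α : ℕ} (hn : 3 ≤ n) (hα2 : 2 ≤ α) : 0 < wtAlpha n k α := by
  haveI : NeZero n := ⟨by omega⟩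
  rcases Nat.eq_zero_or_pos (wtAlpha n k α) with h | h
  · exfalso
    have hne : (Ach n k (DeltaSeq α)).Nonempty := ach_nonempty (by omega) _
    have hmem : wtAlpha n k α ∈ Ach n k (DeltaSeq α) := Nat.sInf_mem hne
    rw [h] at hmem
    obtain ⟨lam, hΩ, hsum⟩ := hmem
    have hlam : ∀ j, lam j = 0 := fun j =>
      Finset.sum_eq_zero_iff.1 hsum j (Finset.mem_univ j)
    have h1 : (1 : ZMod n) ∈ OmegaSet n k (DeltaSeq α) lam := by rw [hΩ]; trivial
    obtain ⟨b, hb, h1e⟩ := h1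
    have hb0 : ∀ j, b j = 0 := by
      intro j
      have := hb j
      rw [hlam j] at this
      simpa using abs_nonpos_iff.1 (by exact_mod_cast this)
    rw [Finset.sum_eq_zero (fun j _ => by rw [hb0 j]; simp)] at h1e
    have h10 : ((1 : ℕ) : ZMod n) = 0 := by exact_mod_cast h1e
    have hdvd : n ∣ 1 := (CharP.cast_eq_zero_iff (ZMod n) n 1).1 h10
    have := Nat.le_of_dvd one_pos hdvd
    omega
  · exact h

lemma ach_nonempty_of_good {α : ℕ} (hn : 3 ≤ n) (hα2 : 2 ≤ α) {S : Finset ℕ}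
    (hS : Good n k α S) : (Ach n k (enum S)).Nonempty := by
  by_contra h
  rw [Set.not_nonempty_iff_eq_empty] at h
  have h0 : wtF n k S = 0 := by
    rw [wtF, wtSeq_eq_sInf_ach]
    show sInf (Ach n k (enum S)) = 0
    rw [h, Nat.sInf_empty]
  rw [hS.2] at h0
  have := wtAlpha_pos hn hα2 (k := k)
  omega

lemma good_mono {α : ℕ} (hn : 3 ≤ n) (hα2 : 2 ≤ α) {S T : Finset ℕ}
    (hS : Good n k α S) (hsub : S ⊆ T) (hT : ∀ x ∈ T, x < α) : Good n k α T := by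
  have hsub' : Set.range (enum S) ⊆ Set.range (enum T) := by
    rw [range_enum, range_enum]; exact_mod_cast hsub
  have hAchS : (Ach n k (enum S)).Nonempty := ach_nonempty_of_good hn hα2 hS
  have hmem : wtF n k S ∈ Ach n k (enum S) := Nat.sInf_mem hAchS
  have h1 : wtF n k T ≤ wtF n k S :=
    Nat.sInf_le (ach_mono (enum_injective S) hsub' hmem)
  have hsubT : Set.range (enum T) ⊆ Set.range (enum (Finset.range α)) := by
    rw [range_enum, range_enum]
    intro x hx
    simp only [Finset.coe_range, Set.mem_Iio]
    exact hT x (by exact_mod_cast hx)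
  have hAchT : (Ach n k (enum T)).Nonempty :=
    ⟨wtF n k S, ach_mono (enum_injective S) hsub' hmem⟩
  have h2 : wtF n k (Finset.range α) ≤ wtF n k T :=
    Nat.sInf_le (ach_mono (enum_injective T) hsubT (Nat.sInf_mem hAchT))
  rw [wtF_range_eq] at h2
  exact ⟨hT, le_antisymm (hS.2 ▸ h1) h2⟩

lemma good_rot {α : ℕ} (hα : orderOf k = α) (hα2 : 2 ≤ α) {S : Finset ℕ} (c : ℕ)
    (hS : Good n k α S) : Good n k α (rotF α c S) := by
  have hα0 : 0 < α := by omega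
  constructor
  · intro x hx
    obtain ⟨y, _, rfl⟩ := Finset.mem_image.1 hx
    exact Nat.mod_lt _ hα0
  · have hrinj : Function.Injective (fun j => (enum S j + c) % α) := by
      intro a b hab
      have ha : enum S a < α := hS.1 _ (mem_of_mem_enum a)
      have hb : enum S b < α := hS.1 _ (mem_of_mem_enum b)
      have hmeq : enum S a ≡ enum S b [MOD α] := Nat.ModEq.add_right_cancel' c hab
      have heq : enum S a = enum S b := by
        rw [Nat.ModEq] at hmeq
        rwa [Nat.mod_eq_of_lt ha, Nat.mod_eq_of_lt hb] at hmeq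
      exact enum_injective S heq
    have hrange : Set.range (fun j => (enum S j + c) % α) = ((rotF α c S : Finset ℕ) : Set ℕ) := by
      rw [rotF, Finset.coe_image, ← range_enum]
      ext x
      simp [Set.mem_image, Set.mem_range]
    have heq : wtF n k (rotF α c S) = wtSeq n k (fun j => (enum S j + c) % α) :=
      wtSeq_eq_of_range (enum_injective _) hrinj (by rw [range_enum, ← hrange])
    rw [heq]
    show sInf (Ach n k fun j => (enum S j + c) % α) = wtAlpha n k α
    rw [ach_rot hα (enum S) c]
    exact hS.2

lemma one_ne_zero_zmod (hn : 3 ≤ n) : (1 : ZMod n) ≠ 0 := by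
  intro h
  have h10 : ((1 : ℕ) : ZMod n) = 0 := by exact_mod_cast h
  have hdvd : n ∣ 1 := (CharP.cast_eq_zero_iff (ZMod n) n 1).1 h10
  have := Nat.le_of_dvd one_pos hdvd
  omega

lemma good_two_le_card {α : ℕ} (hn : 3 ≤ n) (hα2 : 2 ≤ α)
    (hwt : wtAlpha n k α < n / 2) {S : Finset ℕ} (hS : Good n k α S) : 2 ≤ S.card := by
  haveI : NeZero n := ⟨by omega⟩
  by_contra hcard
  push_neg at hcard
  obtain ⟨lam, hΩ, hsum⟩ := Nat.sInf_mem (ach_nonempty_of_good hn hα2 hS)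
  have hwtS : ∑ j, lam j = wtAlpha n k α := by
    rw [hsum]; exact hS.2
  have hc01 : S.card = 0 ∨ S.card = 1 := by omega
  rcases hc01 with hc | hc
  · -- empty: Omega = {0}
    haveI : IsEmpty (Fin S.card) := by rw [hc]; infer_instance
    have h1 : (1 : ZMod n) ∈ OmegaSet n k (enum S) lam := by rw [hΩ]; trivial
    obtain ⟨b, _, h1e⟩ := h1
    rw [Finset.univ_eq_empty, Finset.sum_empty] at h1e
    exact one_ne_zero_zmod hn h1e
  · -- singleton
    have hj0 : (0 : ℕ) < S.card := by omega
    set j0 : Fin S.card := ⟨0, hj0⟩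
    set L : ℕ := lam j0 with hL
    set u : ZMod n := ((k ^ (enum S j0) : (ZMod n)ˣ) : ZMod n) with hu
    have hsum1 : ∀ (f : Fin S.card → ZMod n), ∑ j, f j = f j0 := by
      intro f
      apply Finset.sum_eq_single j0
      · intro b _ hb
        exfalso; apply hb
        have : (b : ℕ) < 1 := by omega
        exact Fin.ext (by omega)
      · intro h; exact absurd (Finset.mem_univ j0) h
    have hLsum : ∑ j, lam j = L := by
      apply Finset.sum_eq_single j0
      · intro b _ hb
        exfalso; apply hb
        have : (b : ℕ) < 1 := by omega
        exact Fin.ext (by omega)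
      · intro h; exact absurd (Finset.mem_univ j0) h
    have hcov : (Finset.univ : Finset (ZMod n)) ⊆
        (Finset.Icc (-(L:ℤ)) (L:ℤ)).image (fun b : ℤ => (b : ZMod n) * u) := by
      intro x _
      have hx : x ∈ OmegaSet n k (enum S) lam := by rw [hΩ]; trivial
      obtain ⟨b, hb, hxe⟩ := hx
      refine Finset.mem_image.2 ⟨b j0, ?_, ?_⟩
      · rw [Finset.mem_Icc]
        have := abs_le.1 (hb j0)
        exact this
      · rw [hxe, hsum1 (fun j => (b j : ZMod n) * ((k ^ (enum S j) : (ZMod n)ˣ) : ZMod n))]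
    have hn1 : (n : ℕ) ≤ 2 * L + 1 := by
      have h1 : (Finset.univ : Finset (ZMod n)).card ≤
          ((Finset.Icc (-(L:ℤ)) (L:ℤ)).image (fun b : ℤ => (b : ZMod n) * u)).card :=
        Finset.card_le_card hcov
      have h2 : ((Finset.Icc (-(L:ℤ)) (L:ℤ)).image (fun b : ℤ => (b : ZMod n) * u)).card ≤
          (Finset.Icc (-(L:ℤ)) (L:ℤ)).card := Finset.card_image_le
      have h3 : (Finset.Icc (-(L:ℤ)) (L:ℤ)).card = 2 * L + 1 := by
        rw [Int.card_Icc]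
        omega
      have h4 : (Finset.univ : Finset (ZMod n)).card = n := by
        rw [Finset.card_univ, ZMod.card]
      omega
    rw [hLsum] at hwtS
    omega

/-- generic extraction of minimal elements -/
lemma exists_minimal (P : Finset ℕ → Prop) :
    ∀ (m : ℕ) (V : Finset ℕ), V.card ≤ m → P V →
      ∃ M, P M ∧ M ⊆ V ∧ ∀ T, P T → T ⊆ M → T = M := by
  intro m
  induction m with
  | zero =>
    intro V hV hPV
    refine ⟨V, hPV, subset_rfl, fun T hT hTV => ?_⟩
    have hV0 : V = ∅ := Finset.card_eq_zero.1 (Nat.le_zero.1 hV)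
    subst hV0
    exact Finset.subset_empty.1 hTV
  | succ m ih =>
    intro V hV hPV
    by_cases h : ∀ T, P T → T ⊆ V → T = V
    · exact ⟨V, hPV, subset_rfl, h⟩
    · push_neg at h
      obtain ⟨T, hT, hTV, hne⟩ := h
      have hss : T ⊂ V := ssubset_of_subset_of_ne hTV hne
      have : T.card ≤ m := by
        have := Finset.card_lt_card hss
        omega
      obtain ⟨M, hM, hMT, hmin⟩ := ih T this hT
      exact ⟨M, hM, hMT.trans hTV, hmin⟩

end GoodFacts

/-! ### modular arithmetic helpers -/

section ModHelpers

variable {α : ℕ}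

lemma mod_char (hα0 : 0 < α) {x : ℕ} (c : ℕ) (hx : x < α) (hc : c ≤ α) :
    (x + c) % α = if x + c < α then x + c else x + c - α := by
  split_ifs with h
  · exact Nat.mod_eq_of_lt h
  · rw [Nat.mod_eq_sub_mod (by omega), Nat.mod_eq_of_lt (by omega)]

lemma rotF_rotF (a b : ℕ) (S : Finset ℕ) :
    rotF α a (rotF α b S) = rotF α (b + a) S := by
  rw [rotF, rotF, rotF, Finset.image_image]
  apply Finset.image_congr
  intro x _
  show ((x + b) % α + a) % α = (x + (b + a)) % α
  rw [Nat.mod_add_mod, add_assoc]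

lemma rotF_eq_self_of_dvd {S : Finset ℕ} (hS : ∀ x ∈ S, x < α) {m : ℕ} (hm : α ∣ m) :
    rotF α m S = S := by
  obtain ⟨q, rfl⟩ := hm
  rw [rotF]
  have : ∀ x ∈ S, (x + α * q) % α = x := by
    intro x hx
    rw [Nat.add_mul_mod_self_left, Nat.mod_eq_of_lt (hS x hx)]
  calc S.image (fun x => (x + α * q) % α) = S.image id := Finset.image_congr (fun x hx => this x hx)
  _ = S := Finset.image_id

lemma unrot_spec (hα0 : 0 < α) (c : ℕ) : α ∣ c + (α - c % α) := by
  have h1 := Nat.div_add_mod c α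
  have h2 : c % α < α := Nat.mod_lt _ hα0
  have h3 : α * (c / α + 1) = α * (c / α) + α := by ring
  exact ⟨c / α + 1, by omega⟩

lemma rot_unrot (hα0 : 0 < α) {S : Finset ℕ} (hS : ∀ x ∈ S, x < α) (c : ℕ) :
    rotF α (α - c % α) (rotF α c S) = S := by
  rw [rotF_rotF]
  exact rotF_eq_self_of_dvd hS (unrot_spec hα0 c)

lemma unrot_rot (hα0 : 0 < α) {S : Finset ℕ} (hS : ∀ x ∈ S, x < α) (c : ℕ) :
    rotF α c (rotF α (α - c % α) S) = S := by
  rw [rotF_rotF]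
  have h1 := Nat.div_add_mod c α
  have h2 : c % α < α := Nat.mod_lt _ hα0
  have h3 : α * (c / α + 1) = α * (c / α) + α := by ring
  exact rotF_eq_self_of_dvd hS ⟨c / α + 1, by omega⟩

lemma rotF_valid (hα0 : 0 < α) (c : ℕ) (S : Finset ℕ) : ∀ x ∈ rotF α c S, x < α := by
  intro x hx
  obtain ⟨y, _, rfl⟩ := Finset.mem_image.1 hx
  exact Nat.mod_lt _ hα0

/-- key covering fact: the backwards walk visits everything -/
lemma walk_cover (hα2 : 2 ≤ α) {a b : ℕ} (ha : a < α) (hb : b < α) :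
    ∃ j, j ≤ α - 1 ∧ (a + j * (α - 1)) % α = b := by
  have hα0 : 0 < α := by omega
  set j : ℕ := (a + α - b) % α with hj
  have hjlt : j < α := Nat.mod_lt _ hα0
  refine ⟨j, by omega, ?_⟩
  have hmul : j * (α - 1) + j = j * α := by
    have h2 : j * (α - 1) = j * α - j := by
      rw [Nat.mul_sub, Nat.mul_one]
    have h1 : j ≤ j * α := Nat.le_mul_of_pos_right j hα0
    omega
  have key : (a + j * (α - 1) + j) % α = (b + j) % α := by
    have hL : (a + j * (α - 1) + j) % α = a % α := by
      rw [show a + j * (α - 1) + j = a + j * α by omega, Nat.add_mul_mod_self_right]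
    have hR : (b + j) % α = a % α := by
      rw [hj, Nat.add_mod_mod, show b + (a + α - b) = a + α by omega, Nat.add_mod_right]
    rw [hL, hR]
  have hmeq : (a + j * (α - 1)) % α = b % α :=
    Nat.ModEq.add_right_cancel' j key
  rw [hmeq, Nat.mod_eq_of_lt hb]

/-- facts about `z = x - 1 (mod α)` -/
lemma z_facts (hα2 : 2 ≤ α) {x : ℕ} (hx : x < α) :
    (x + (α - 1)) % α < α ∧ (x + (α - 1)) % α ≠ x ∧
      (x + (α - (x + (α - 1)) % α)) % α = 1 ∧
      ((x + (α - 1)) % α + (α - (x + (α - 1)) % α)) % α = 0 := by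
  have hα0 : 0 < α := by omega
  set z : ℕ := (x + (α - 1)) % α with hz
  have hzval : z = if x + (α - 1) < α then x + (α - 1) else x - 1 := by
    rw [hz, mod_char hα0 (α - 1) hx (by omega)]
    split_ifs with h
    · rfl
    · omega
  have hzlt : z < α := Nat.mod_lt _ hα0
  refine ⟨hzlt, ?_, ?_, ?_⟩
  · rw [hzval]; split_ifs <;> omega
  · rw [mod_char hα0 _ hx (by omega)]
    rw [hzval]
    split_ifs with h1 h2 h2 <;> omega
  · rw [mod_char hα0 _ hzlt (by omega)]
    split_ifs with h <;> omega

end ModHelpers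

/-! ### the core combinatorial lemma -/

section Core

variable {α : ℕ}

lemma rot_minimal (hα0 : 0 < α) (Gd : Finset ℕ → Prop)
    (hbd : ∀ S, Gd S → ∀ x ∈ S, x < α)
    (hrot : ∀ c S, Gd S → Gd (rotF α c S))
    {M : Finset ℕ} (hM : Gd M) (hmin : ∀ T, Gd T → T ⊆ M → T = M) (c : ℕ) :
    ∀ T, Gd T → T ⊆ rotF α c M → T = rotF α c M := by
  intro T hT hTsub
  have hTval : ∀ x ∈ T, x < α := hbd T hT
  have hT' : Gd (rotF α (α - c % α) T) := hrot _ _ hT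
  have hT'sub : rotF α (α - c % α) T ⊆ M := by
    have := Finset.image_subset_image (f := fun x => (x + (α - c % α)) % α) hTsub
    rw [show (rotF α c M).image (fun x => (x + (α - c % α)) % α)
      = rotF α (α - c % α) (rotF α c M) from rfl,
      rot_unrot hα0 (hbd M hM) c] at this
    exact this
  have heq := hmin _ hT' hT'sub
  have := congrArg (rotF α c) heq
  rwa [unrot_rot hα0 hTval c] at this

lemma core (hα2 : 2 ≤ α) (Gd : Finset ℕ → Prop)
    (hbd : ∀ S, Gd S → ∀ x ∈ S, x < α)
    (hup : ∀ S T, Gd S → S ⊆ T → (∀ x ∈ T, x < α) → Gd T)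
    (hrot : ∀ c S, Gd S → Gd (rotF α c S))
    (h2 : ∀ S, Gd S → 2 ≤ S.card)
    (hex : ∃ S, Gd S ∧ 0 ∈ S) :
    ∃ S, Gd S ∧ 0 ∈ S ∧ 1 ∈ S ∧ ∀ T, Gd T → 0 ∈ T → T ⊆ S → T = S := by
  have hα0 : 0 < α := by omega
  by_contra hcon
  push_neg at hcon
  -- no minimal 0-good set contains 1
  have no1 : ∀ U, Gd U → 0 ∈ U → (∀ T, Gd T → 0 ∈ T → T ⊆ U → T = U) → 1 ∉ U := by
    intro U hU h0 hminU h1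
    obtain ⟨T, hT, h0T, hTU, hne⟩ := hcon U hU h0 h1
    exact hne (hminU T hT h0T hTU)
  -- the step
  have step : ∀ M x, Gd M → (∀ T, Gd T → T ⊆ M → T = M) → x ∈ M →
      ∃ M', Gd M' ∧ (∀ T, Gd T → T ⊆ M' → T = M') ∧ ((x + (α-1)) % α) ∈ M' ∧
        M'.erase ((x + (α-1)) % α) ⊆ M.erase x := by
    intro M x hM hmin hxM
    have hxlt : x < α := hbd M hM x hxM
    obtain ⟨hzlt, hzx, hx1, hz0⟩ := z_facts hα2 hxlt
    set z : ℕ := (x + (α - 1)) % α with hzdef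
    set c : ℕ := α - z with hcdef
    set W : Finset ℕ := rotF α c M with hWdef
    have hWgd : Gd W := hrot c M hM
    have hWmin : ∀ T, Gd T → T ⊆ W → T = W :=
      rot_minimal hα0 Gd hbd hrot hM hmin c
    have h1W : 1 ∈ W := by
      refine Finset.mem_image.2 ⟨x, hxM, ?_⟩
      exact hx1
    by_cases hzM : z ∈ M
    · -- rotation of M is itself a minimal 0-good set containing 1 : contradiction
      exfalso
      have h0W : 0 ∈ W := Finset.mem_image.2 ⟨z, hzM, hz0⟩
      exact no1 W hWgd h0W (fun T hT _ hTW => hWmin T hT hTW) h1W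
    · have h0W : 0 ∉ W := by
        intro h0
        obtain ⟨y, hyM, hy0⟩ := Finset.mem_image.1 h0
        have hylt : y < α := hbd M hM y hyM
        have : y = z := by
          rw [mod_char hα0 c hylt (by omega)] at hy0
          split_ifs at hy0 <;> omega
        exact hzM (this ▸ hyM)
      set V : Finset ℕ := insert 0 W with hVdef
      have hVval : ∀ y ∈ V, y < α := by
        intro y hy
        rcases Finset.mem_insert.1 hy with rfl | hyW
        · omega
        · exact hbd W hWgd y hyW
      have hVgd : Gd V := hup W V hWgd (Finset.subset_insert _ _) hVval
      -- extract a minimal 0-good set inside V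
      obtain ⟨U, ⟨hUgd, hU0⟩, hUV, hUmin⟩ :=
        exists_minimal (fun T => Gd T ∧ 0 ∈ T) V.card V le_rfl ⟨hVgd, Finset.mem_insert_self 0 W⟩
      have hU1 : 1 ∉ U :=
        no1 U hUgd hU0 (fun T hT h0T hTU => hUmin T ⟨hT, h0T⟩ hTU) 
      -- rotate U back by z
      set U' : Finset ℕ := rotF α z U with hU'def
      have hU'gd : Gd U' := hrot z U hUgd
      have hU'sub : U' ⊆ insert z (M.erase x) := by
        intro y' hy'
        obtain ⟨y, hyU, hyy'⟩ := Finset.mem_image.1 hy'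
        rcases Finset.mem_insert.1 (hUV hyU) with rfl | hyW
        · -- y = 0 : image is z
          have : y' = z := by rw [← hyy', Nat.zero_add]; exact Nat.mod_eq_of_lt hzlt
          rw [this]; exact Finset.mem_insert_self _ _
        · -- y ∈ W : image is the original element of M
          obtain ⟨w, hwM, hwy⟩ := Finset.mem_image.1 hyW
          have hwlt : w < α := hbd M hM w hwM
          have hy'w : y' = w := by
            rw [← hyy', ← hwy]
            show ((w + c) % α + z) % α = w
            rw [Nat.mod_add_mod, hcdef]
            rw [show w + (α - z) + z = w + α by omega, Nat.add_mod_right,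
              Nat.mod_eq_of_lt hwlt]
          have hwx : w ≠ x := by
            intro h
            apply hU1
            have : y = 1 := by rw [← hwy, h]; exact hx1
            rwa [← this]
          rw [hy'w]
          exact Finset.mem_insert_of_mem (Finset.mem_erase.2 ⟨hwx, hwM⟩)
      -- extract a minimal good set inside U'
      obtain ⟨M', hM'gd, hM'U', hM'min⟩ := exists_minimal Gd U'.card U' le_rfl hU'gd
      have hzM' : z ∈ M' := by
        by_contra hz
        have hsub : M' ⊆ M.erase x := by
          intro y hy
          rcases Finset.mem_insert.1 (hU'sub (hM'U' hy)) with rfl | h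
          · exact absurd hy hz
          · exact h
        have : M' = M := hmin M' hM'gd (hsub.trans (Finset.erase_subset _ _))
        rw [this] at hsub
        exact absurd (Finset.mem_erase.1 (hsub hxM)).1 (by simp)
      refine ⟨M', hM'gd, hM'min, hzM', ?_⟩
      intro y hy
      have := Finset.mem_erase.1 hy
      rcases Finset.mem_insert.1 (hU'sub (hM'U' this.2)) with rfl | h
      · exact absurd rfl this.1
      · exact h
  -- initialize
  obtain ⟨S0, hS0gd, hS00⟩ := hex
  obtain ⟨M₀, hM₀gd, _, hM₀min⟩ := exists_minimal Gd S0.card S0 le_rfl hS0gd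
  have hM₀ne : M₀.Nonempty := Finset.card_pos.1 (by have := h2 M₀ hM₀gd; omega)
  obtain ⟨x₀, hx₀M⟩ := hM₀ne
  have hx₀lt : x₀ < α := hbd M₀ hM₀gd x₀ hx₀M
  -- the march
  have march : ∀ i : ℕ, ∃ M x, Gd M ∧ (∀ T, Gd T → T ⊆ M → T = M) ∧ x ∈ M ∧
      x = (x₀ + i * (α - 1)) % α ∧ M.erase x ⊆ M₀.erase x₀ ∧
      (∀ y ∈ M.erase x, ∀ j, j ≤ i → y ≠ (x₀ + j * (α - 1)) % α) := by
    intro i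
    induction i with
    | zero =>
      refine ⟨M₀, x₀, hM₀gd, hM₀min, hx₀M, ?_, subset_rfl, ?_⟩
      · rw [Nat.zero_mul, Nat.add_zero, Nat.mod_eq_of_lt hx₀lt]
      · intro y hy j hj
        interval_cases j
        rw [Nat.zero_mul, Nat.add_zero, Nat.mod_eq_of_lt hx₀lt]
        exact (Finset.mem_erase.1 hy).1
    | succ i ih =>
      obtain ⟨M, x, hMgd, hMmin, hxM, hxpos, hMer, hMpass⟩ := ih
      obtain ⟨M', hM'gd, hM'min, hzM', hM'er⟩ := step M x hMgd hMmin hxM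
      refine ⟨M', (x + (α - 1)) % α, hM'gd, hM'min, hzM', ?_, hM'er.trans hMer, ?_⟩
      · rw [hxpos, Nat.mod_add_mod]
        congr 1
        ring
      · intro y hy j hj
        have hyM : y ∈ M.erase x := hM'er hy
        rcases Nat.lt_or_ge j (i + 1) with h | h
        · exact hMpass y hyM j (by omega)
        · have hji : j = i + 1 := by omega
          subst hji
          have hyz : y ≠ (x + (α - 1)) % α := (Finset.mem_erase.1 hy).1
          intro hcontra
          apply hyz
          rw [hcontra, hxpos, Nat.mod_add_mod]
          congr 1
          ring
  -- the contradiction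
  obtain ⟨M, x, hMgd, _, hxM, _, hMer, hMpass⟩ := march (α - 1)
  have hcard : 2 ≤ M.card := h2 M hMgd
  have hne : (M.erase x).Nonempty := by
    rw [← Finset.card_pos, Finset.card_erase_of_mem hxM]
    omega
  obtain ⟨y, hyM⟩ := hne
  have hylt : y < α := by
    have : y ∈ M₀ := (Finset.erase_subset _ _) (hMer hyM)
    exact hbd M₀ hM₀gd y this
  obtain ⟨j, hj, hjy⟩ := walk_cover hα2 hx₀lt hylt
  exact hMpass y hyM j hj hjy.symm

end Core

/-! ### reflection -/

section Refl

variable {α : ℕ}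

def reflF (α : ℕ) (S : Finset ℕ) : Finset ℕ := S.image (fun x => (α - x) % α)

lemma neg_mod (hα0 : 0 < α) {x : ℕ} (hx : x < α) :
    (α - x) % α = if x = 0 then 0 else α - x := by
  split_ifs with h
  · subst h; rw [Nat.sub_zero, Nat.mod_self]
  · exact Nat.mod_eq_of_lt (by omega)

lemma reflF_valid (hα0 : 0 < α) (S : Finset ℕ) : ∀ x ∈ reflF α S, x < α := by
  intro x hx
  obtain ⟨y, _, rfl⟩ := Finset.mem_image.1 hx
  exact Nat.mod_lt _ hα0

lemma reflF_reflF (hα0 : 0 < α) {S : Finset ℕ} (hS : ∀ x ∈ S, x < α) :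
    reflF α (reflF α S) = S := by
  rw [reflF, reflF, Finset.image_image]
  have : ∀ x ∈ S, ((α - (α - x) % α) % α) = x := by
    intro x hx
    have hxlt := hS x hx
    rw [neg_mod hα0 hxlt]
    split_ifs with h
    · subst h; rw [Nat.sub_zero, Nat.mod_self]
    · rw [neg_mod hα0 (by omega), if_neg (by omega)]
      omega
  calc S.image _ = S.image id := Finset.image_congr (fun x hx => this x hx)
  _ = S := Finset.image_id

lemma refl_rot_comm (hα0 : 0 < α) {S : Finset ℕ} (hS : ∀ x ∈ S, x < α) (c : ℕ) :
    reflF α (rotF α c S) = rotF α (α - c % α) (reflF α S) := by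
  rw [reflF, rotF, reflF, rotF, Finset.image_image, Finset.image_image]
  apply Finset.image_congr
  intro x hx
  have hxlt := hS x hx
  show (α - (x + c) % α) % α = ((α - x) % α + (α - c % α)) % α
  have hc₀ : c % α < α := Nat.mod_lt _ hα0
  set c₀ : ℕ := c % α with hc₀def
  have h1 : (x + c) % α = (x + c₀) % α := (Nat.add_mod_mod x c α).symm
  rcases Nat.lt_or_ge (x + c₀) α with hA | hB
  · rw [h1, Nat.mod_eq_of_lt hA]
    by_cases hx0 : x = 0
    · subst hx0
      rw [Nat.zero_add, Nat.sub_zero, Nat.mod_self, Nat.zero_add]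
    · rw [neg_mod hα0 hxlt, if_neg hx0]
      by_cases hc0 : c₀ = 0
      · rw [hc0, Nat.add_zero, Nat.sub_zero]
        rw [Nat.mod_eq_of_lt (show α - x < α by omega)]
        rw [Nat.mod_eq_sub_mod (by omega), Nat.mod_eq_of_lt (by omega)]
        omega
      · rw [Nat.mod_eq_of_lt (show α - (x + c₀) < α by omega)]
        rw [Nat.mod_eq_sub_mod (by omega), Nat.mod_eq_of_lt (by omega)]
        omega
  · have hx1 : 1 ≤ x := by omega
    rw [h1, mod_char hα0 c₀ hxlt hc₀.le, if_neg (by omega)]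
    rw [neg_mod hα0 hxlt, if_neg (by omega)]
    by_cases heq : x + c₀ = α
    · rw [show α - (x + c₀ - α) = α by omega, Nat.mod_self]
      rw [show α - x + (α - c₀) = α by omega, Nat.mod_self]
    · rw [Nat.mod_eq_of_lt (show α - (x + c₀ - α) < α by omega)]
      rw [Nat.mod_eq_of_lt (show α - x + (α - c₀) < α by omega)]
      omega

lemma reflF_injOn (hα0 : 0 < α) {S : Finset ℕ} (hS : ∀ x ∈ S, x < α) :
    Set.InjOn (fun x => (α - x) % α) S := by
  intro x hx y hy hxy
  have hxlt := hS x hx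
  have hylt := hS y hy
  simp only at hxy
  rw [neg_mod hα0 hxlt, neg_mod hα0 hylt] at hxy
  split_ifs at hxy <;> omega

lemma reflF_card (hα0 : 0 < α) {S : Finset ℕ} (hS : ∀ x ∈ S, x < α) :
    (reflF α S).card = S.card :=
  Finset.card_image_of_injOn (reflF_injOn hα0 hS)

lemma reflF_range (hα0 : 0 < α) : reflF α (Finset.range α) = Finset.range α := by
  apply Finset.eq_of_subset_of_card_le
  · intro x hx
    exact Finset.mem_range.2 (reflF_valid hα0 _ x hx)
  · rw [reflF_card hα0 (fun x hx => Finset.mem_range.1 hx)]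

end Refl

/-! ### existence of extremal minimal prime finsets -/

section Extremal

variable {α : ℕ} (hn : 3 ≤ n) (hα : orderOf k = α) (hα2 : 2 ≤ α)
  (hwt : wtAlpha n k α < n / 2)

include hn hα hα2 hwt in
lemma exists_mp_one : ∃ S : Finset ℕ, Good n k α S ∧ 0 ∈ S ∧ 1 ∈ S ∧
    ∀ T, Good n k α T → 0 ∈ T → T ⊆ S → T = S := by
  apply core hα2 (Good n k α)
  · exact fun S hS => hS.1
  · exact fun S T hS hsub hT => good_mono hn hα2 hS hsub hT
  · exact fun c S hS => good_rot hα hα2 c hS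
  · exact fun S hS => good_two_le_card hn hα2 hwt hS
  · exact ⟨Finset.range α, good_range, Finset.mem_range.2 (by omega)⟩

include hn hα hα2 hwt in
lemma exists_mp_top : ∃ S : Finset ℕ, Good n k α S ∧ 0 ∈ S ∧ (α - 1) ∈ S ∧
    ∀ T, Good n k α T → 0 ∈ T → T ⊆ S → T = S := by
  have hα0 : 0 < α := by omega
  set Gd : Finset ℕ → Prop := fun S => Good n k α (reflF α S) ∧ ∀ x ∈ S, x < α with hGd
  have hcore : ∃ S, Gd S ∧ 0 ∈ S ∧ 1 ∈ S ∧ ∀ T, Gd T → 0 ∈ T → T ⊆ S → T = S := by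
    apply core hα2 Gd
    · exact fun S hS => hS.2
    · intro S T hS hsub hT
      refine ⟨good_mono hn hα2 hS.1 (Finset.image_subset_image hsub)
        (reflF_valid hα0 T), hT⟩
    · intro c S hS
      refine ⟨?_, rotF_valid hα0 c S⟩
      rw [refl_rot_comm hα0 hS.2 c]
      exact good_rot hα hα2 _ hS.1
    · intro S hS
      have := good_two_le_card hn hα2 hwt hS.1
      rw [reflF_card hα0 hS.2] at this
      exact this
    · refine ⟨Finset.range α, ⟨?_, fun x hx => Finset.mem_range.1 hx⟩,
        Finset.mem_range.2 (by omega)⟩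
      rw [reflF_range hα0]
      exact good_range
  obtain ⟨S', ⟨hS'good, hS'val⟩, h0, h1, hmin⟩ := hcore
  refine ⟨reflF α S', hS'good, ?_, ?_, ?_⟩
  · exact Finset.mem_image.2 ⟨0, h0, by rw [Nat.sub_zero, Nat.mod_self]⟩
  · exact Finset.mem_image.2 ⟨1, h1, by rw [Nat.mod_eq_of_lt (by omega)]⟩
  · intro T hT h0T hTsub
    have hTval : ∀ x ∈ T, x < α := hT.1
    have hrT : Gd (reflF α T) := by
      refine ⟨?_, reflF_valid hα0 T⟩
      rw [reflF_reflF hα0 hTval]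
      exact hT
    have h0rT : 0 ∈ reflF α T :=
      Finset.mem_image.2 ⟨0, h0T, by rw [Nat.sub_zero, Nat.mod_self]⟩
    have hrsub : reflF α T ⊆ S' := by
      have := Finset.image_subset_image (f := fun x => (α - x) % α) hTsub
      rwa [show (reflF α S').image (fun x => (α - x) % α) = reflF α (reflF α S') from rfl,
        reflF_reflF hα0 hS'val] at this
    have := hmin _ hrT h0rT hrsub
    calc T = reflF α (reflF α T) := (reflF_reflF hα0 hTval).symm
    _ = reflF α S' := by rw [this]
    _ = reflF α S' := rfl

end Extremal

/-! ### bridge to sequences -/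

section Bridge

variable {α : ℕ}

lemma mp_of_finset (hα2 : 2 ≤ α) {S : Finset ℕ} (hS : Good n k α S) (h0 : 0 ∈ S)
    (hmin : ∀ T, Good n k α T → 0 ∈ T → T ⊆ S → T = S) :
    IsMinimalPrimeSeq n k α (enum S) := by
  refine ⟨⟨?_, enum_strictAnti S⟩, ?_, hS.2, ?_⟩
  · intro j
    have := hS.1 _ (mem_of_mem_enum j)
    omega
  · rw [range_enum]
    exact_mod_cast h0
  · intro q i₀ hseq h0' hsub hne heq
    set T : Finset ℕ := Finset.univ.image i₀ with hTdef
    have hrange : Set.range i₀ = (T : Set ℕ) := by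
      rw [hTdef, Finset.coe_image, Finset.coe_univ, Set.image_univ]
    have hTval : ∀ x ∈ T, x < α := by
      intro x hx
      obtain ⟨j, _, rfl⟩ := Finset.mem_image.1 hx
      have := hseq.1 j
      omega
    have hTgood : Good n k α T := by
      refine ⟨hTval, ?_⟩
      rw [hTdef, wtF_eq_wtSeq hseq.2.injective, heq]
    have h0T : 0 ∈ T := by
      have : (0:ℕ) ∈ (T : Set ℕ) := hrange ▸ h0'
      exact_mod_cast this
    have hTS : T ⊆ S := by
      rw [← Finset.coe_subset, ← hrange, ← range_enum]
      exact hsub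
    have := hmin T hTgood h0T hTS
    apply hne
    rw [hrange, this, range_enum]

lemma codegSeq_pos_of_mp (hn : 3 ≤ n) (hα2 : 2 ≤ α) (hwt : wtAlpha n k α < n / 2)
    {r : ℕ} {i : Fin r → ℕ} (hi : IsMinimalPrimeSeq n k α i) :
    ∃ y, y ∈ Set.range i ∧ y ≠ 0 := by
  set T : Finset ℕ := Finset.univ.image i with hTdef
  have hrange : Set.range i = (T : Set ℕ) := by
    rw [hTdef, Finset.coe_image, Finset.coe_univ, Set.image_univ]
  have hTval : ∀ x ∈ T, x < α := by
    intro x hx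
    obtain ⟨j, _, rfl⟩ := Finset.mem_image.1 hx
    have := hi.1.1 j
    omega
  have hTgood : Good n k α T := by
    refine ⟨hTval, ?_⟩
    rw [hTdef, wtF_eq_wtSeq hi.1.2.injective, hi.2.2.1]
  have hcard : 2 ≤ T.card := good_two_le_card hn hα2 hwt hTgood
  obtain ⟨y, hyT, hy0⟩ := Finset.exists_mem_ne (show 1 < T.card by omega) 0
  refine ⟨y, ?_, hy0⟩
  rw [hrange]
  exact_mod_cast hyT

end Bridge

end MPwork

open MPwork

/-- If `i` is a minimal prime sequence realizing `wt(n,k;α)` of largest degree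
and `i′` is a minimal prime sequence realizing `wt(n,k;α)` of smallest
codegree, then `deg(i) + codeg(i′) = α`. -/
theorem deg_add_codeg_eq_of_max_deg_min_codeg (n : ℕ) (hn : 3 ≤ n)
    (k : (ZMod n)ˣ) (α : ℕ) (hα : orderOf k = α) (hα2 : 2 ≤ α)
    (hwt : wtAlpha n k α < n / 2)
    (r : ℕ) (i : Fin r → ℕ) (hi : IsMinimalPrimeSeq n k α i)
    (hmax : ∀ (q : ℕ) (i'' : Fin q → ℕ), IsMinimalPrimeSeq n k α i'' →
      degSeq i'' ≤ degSeq i)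
    (s : ℕ) (i' : Fin s → ℕ) (hi' : IsMinimalPrimeSeq n k α i')
    (hmin : ∀ (q : ℕ) (i'' : Fin q → ℕ), IsMinimalPrimeSeq n k α i'' →
      codegSeq i' ≤ codegSeq i'') :
    degSeq i + codegSeq i' = α := by
  have hα0 : 0 < α := by omega
  -- degree part
  obtain ⟨Sd, hSdgood, hSd0, hSdtop, hSdmin⟩ := exists_mp_top hn hα hα2 hwt
  have hmpd : IsMinimalPrimeSeq n k α (enum Sd) := mp_of_finset hα2 hSdgood hSd0 hSdmin
  have hdeg_enum : degSeq (enum Sd) = α - 1 := by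
    rw [degSeq, range_enum]
    apply le_antisymm
    · apply csSup_le ⟨0, by exact_mod_cast hSd0⟩
      intro x hx
      have := hSdgood.1 x (by exact_mod_cast hx)
      omega
    · apply le_csSup (Sd.finite_toSet.bddAbove)
      exact_mod_cast hSdtop
  have hdeg_le : degSeq i ≤ α - 1 := by
    apply csSup_le ⟨0, hi.2.1⟩
    rintro x ⟨j, rfl⟩
    exact hi.1.1 j
  have hdeg_ge : α - 1 ≤ degSeq i := hdeg_enum ▸ hmax Sd.card (enum Sd) hmpd
  have hdeg : degSeq i = α - 1 := le_antisymm hdeg_le hdeg_ge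
  -- codegree part
  obtain ⟨Sc, hScgood, hSc0, hSc1, hScmin⟩ := exists_mp_one hn hα hα2 hwt
  have hmpc : IsMinimalPrimeSeq n k α (enum Sc) := mp_of_finset hα2 hScgood hSc0 hScmin
  have hcodeg_enum : codegSeq (enum Sc) = 1 := by
    have h1mem : (1:ℕ) ∈ { v | v ∈ Set.range (enum Sc) ∧ v ≠ 0 } := by
      refine ⟨?_, one_ne_zero⟩
      rw [range_enum]
      exact_mod_cast hSc1
    have hle : codegSeq (enum Sc) ≤ 1 := Nat.sInf_le h1mem
    have hmem := Nat.sInf_mem (⟨1, h1mem⟩ : Set.Nonempty _)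
    have hne : codegSeq (enum Sc) ≠ 0 := hmem.2
    omega
  have hco_le : codegSeq i' ≤ 1 := hcodeg_enum ▸ hmin Sc.card (enum Sc) hmpc
  have hco_ge : 1 ≤ codegSeq i' := by
    obtain ⟨y, hy, hy0⟩ := codegSeq_pos_of_mp hn hα2 hwt hi'
    have hmem := Nat.sInf_mem (⟨y, hy, hy0⟩ : Set.Nonempty { v | v ∈ Set.range i' ∧ v ≠ 0 })
    have : codegSeq i' ≠ 0 := hmem.2
    omega
  have hcodeg : codegSeq i' = 1 := le_antisymm hco_le hco_ge
  rw [hdeg, hcodeg]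
  omega
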